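/- Let C : S² → ℝ be continuous and let ψ : ℝ × S² → ℝ be continuous with compact support. Define (D_C ψ)(u, n) := ψ(e^{−C(n)} u, n), and for a function φ : ℝ × S² → ℝ write φ̂(E, n) := (2π)^{-1/2} ∫_ℝ φ(u, n) e^{iEu} du. Then ∫_{S²} ∫_0^∞ E |(D_C ψ)^∧(E, n)|² dE dσ(n) = ∫_{S²} ∫_0^∞ E |ψ̂(E, n)|² dE dσ(n). -/

import Mathlib

open MeasureTheory Metric Filter
open scoped Topology InnerProductSpace

noncomputable section

/-- `E3` is Euclidean three-dimensional space. -/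
abbrev E3 : Type := EuclideanSpace ℝ (Fin 3)

/-- `S2` is the unit sphere in `E3`. -/
abbrev S2 : Type := Metric.sphere (0 : E3) 1

/-- The standard surface measure on the unit sphere `S²`. -/
def sphereMeasure : Measure S2 := (volume : Measure E3).toSphere

/-- The Fourier transform in the retarded coordinate `u` at fixed angle `n`:
`φ̂(E, n) = (2π)^{-1/2} ∫_ℝ φ(u, n) e^{iEu} du`. -/
def uhat (φ : ℝ × S2 → ℝ) (E : ℝ) (n : S2) : ℂ :=
  ((Real.sqrt (2 * Real.pi) : ℝ) : ℂ)⁻¹ *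
    ∫ u : ℝ, (φ (u, n) : ℂ) * Complex.exp (Complex.I * E * u)

lemma uhat_scale (ψ : ℝ × S2 → ℝ) (φ : ℝ × S2 → ℝ) (n : S2) {c : ℝ} (hc : 0 < c)
    (hφ : ∀ u, φ (u, n) = ψ (c * u, n)) (E : ℝ) :
    uhat φ E n = ((c⁻¹ : ℝ) : ℂ) * uhat ψ (c⁻¹ * E) n := by
  unfold uhat
  have h := MeasureTheory.Measure.integral_comp_mul_left
    (fun x : ℝ => (ψ (x, n) : ℂ) * Complex.exp (Complex.I * ((c⁻¹ * E : ℝ) : ℂ) * x)) c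
  have h2 : (∫ u : ℝ, (φ (u, n) : ℂ) * Complex.exp (Complex.I * E * u))
      = ((c⁻¹ : ℝ) : ℂ) * ∫ x : ℝ, (ψ (x, n) : ℂ)
        * Complex.exp (Complex.I * ((c⁻¹ * E : ℝ) : ℂ) * x) := by
    rw [show (∫ u : ℝ, (φ (u, n) : ℂ) * Complex.exp (Complex.I * E * u))
        = ∫ u : ℝ, (ψ (c * u, n) : ℂ)
            * Complex.exp (Complex.I * ((c⁻¹ * E : ℝ) : ℂ) * ((c * u : ℝ) : ℂ)) by
      refine integral_congr_ae (Filter.Eventually.of_forall fun u => ?_)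
      simp only [hφ]
      congr 1
      congr 1
      have hcc : (c : ℂ) ≠ 0 := by exact_mod_cast hc.ne'
      push_cast
      field_simp]
    rw [h, abs_of_pos (inv_pos.mpr hc), Complex.real_smul]
  rw [h2]; ring

/-- The distorted (lightlike dilation
`(D_C ψ)(u, n) = ψ(e^{−C(n)} u, n)` preserves the squared norm in the one-particle space
`L²(ℝ₊ × S², E dE dσ)` of the boundary theory. -/
theorem statement17 (C : S2 → ℝ) (hC : Continuous C) (ψ : ℝ × S2 → ℝ)
    (hψ : Continuous ψ) (hsupp : HasCompactSupport ψ) :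
    (∫ n : S2,
        (∫ E in Set.Ioi (0 : ℝ),
          E * ‖uhat (fun p => ψ (Real.exp (-C p.2) * p.1, p.2)) E n‖ ^ 2)
      ∂sphereMeasure)
    = ∫ n : S2,
        (∫ E in Set.Ioi (0 : ℝ), E * ‖uhat ψ E n‖ ^ 2) ∂sphereMeasure := by
  refine integral_congr_ae (Filter.Eventually.of_forall fun n => ?_)
  set c : ℝ := Real.exp (-C n) with hc
  have hcpos : 0 < c := Real.exp_pos _
  have hsc : ∀ E, uhat (fun p => ψ (Real.exp (-C p.2) * p.1, p.2)) E n
      = ((c⁻¹ : ℝ) : ℂ) * uhat ψ (c⁻¹ * E) n :=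
    uhat_scale ψ _ n hcpos (fun u => rfl)
  have key : ∀ E : ℝ, E * ‖uhat (fun p => ψ (Real.exp (-C p.2) * p.1, p.2)) E n‖ ^ 2
      = (c⁻¹ * c⁻¹) * (E * ‖uhat ψ (c⁻¹ * E) n‖ ^ 2) := by
    intro E
    rw [hsc, norm_mul, Complex.norm_of_nonneg (inv_pos.mpr hcpos).le]
    ring
  simp only [key]
  have h := MeasureTheory.integral_comp_mul_left_Ioi
    (fun x : ℝ => (c⁻¹ * c⁻¹) * ((c * x) * ‖uhat ψ x n‖ ^ 2)) 0
    (inv_pos.mpr hcpos)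
  simp only [mul_zero, inv_mul_cancel_left₀ hcpos.ne', mul_inv_cancel_left₀ hcpos.ne', smul_eq_mul, inv_inv] at h
  rw [h, ← integral_const_mul]
  refine setIntegral_congr_ae measurableSet_Ioi (Filter.Eventually.of_forall fun x _ => ?_)
  field_simp
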